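/- arXiv:2103.02475 — 2 statements merged into one kernel-verified Lean document; each statement's English description precedes it below -/
import Mathlib

section
/- Let N be a Petri net with non-conflicting transition t ∈ T_E (t shares no input place with any transition of T_I) and suppose M[t⟩ holds at marking M. Then for any marking M' reachable from M by firing only transitions in T_I, transition t is still enabled at M': persistence of explicit transitions under implicit firings in a non-conflicting partition. -/
/-- A Petri net with `m` places and `n` transitions. -/
structure PetriNet (m n : ℕ) where
  Pre : Fin m → Fin n → ℕ
  Post : Fin m → Fin n → ℕ

namespace PetriNet

variable {m n : ℕ}

/-- Incidence matrix `C = Post - Pre`. -/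
def C (N : PetriNet m n) (p : Fin m) (t : Fin n) : ℤ :=
  (N.Post p t : ℤ) - (N.Pre p t : ℤ)

/-- Transition `t` is enabled at marking `M`. -/
def enabled (N : PetriNet m n) (M : Fin m → ℕ) (t : Fin n) : Prop :=
  ∀ p, N.Pre p t ≤ M p

/-- Firing transition `t` at marking `M`. -/
def fire (N : PetriNet m n) (M : Fin m → ℕ) (t : Fin n) : Fin m → ℕ :=
  fun p => M p + N.Post p t - N.Pre p t

/-- `fires N M σ M'` : the sequence `σ` is firable at `M` and yields `M'`. -/
inductive fires (N : PetriNet m n) : (Fin m → ℕ) → List (Fin n) → (Fin m → ℕ) → Prop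
  | nil (M : Fin m → ℕ) : fires N M [] M
  | cons {M M' : Fin m → ℕ} {t : Fin n} {σ : List (Fin n)} :
      N.enabled M t → fires N (N.fire M t) σ M' → fires N M (t :: σ) M'

/-- Firing vector of a sequence. -/
def fvec (σ : List (Fin n)) : Fin n → ℕ := fun t => σ.count t

/-- Arcs of the subnet induced by transition set `TI` (full net for `TI = Set.univ`). -/
def arc (N : PetriNet m n) (TI : Set (Fin n)) :
    (Fin m ⊕ Fin n) → (Fin m ⊕ Fin n) → Prop
  | Sum.inl p, Sum.inr t => t ∈ TI ∧ 0 < N.Pre p t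
  | Sum.inr t, Sum.inl p => t ∈ TI ∧ 0 < N.Post p t
  | _, _ => False

/-- The subnet induced by `TI` is acyclic: no directed cycle. -/
def SubnetAcyclic (N : PetriNet m n) (TI : Set (Fin n)) : Prop :=
  ∀ x, ¬ Relation.TransGen (N.arc TI) x x

/-- Transitions in structural conflict. -/
def Tconf (N : PetriNet m n) : Set (Fin n) :=
  {t | ∃ p, 0 < N.Pre p t ∧ ∃ t', t' ≠ t ∧ 0 < N.Pre p t'}

/-- `TI` is non-conflicting: `TI ⊆ T \ T_conf`. -/
def NonConflicting (N : PetriNet m n) (TI : Set (Fin n)) : Prop :=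
  ∀ t ∈ TI, t ∉ N.Tconf

/-- `TI` is non-increasing w.r.t. the GMEC weight vector `w`. -/
def NonIncreasing (N : PetriNet m n) (w : Fin m → ℤ) (TI : Set (Fin n)) : Prop :=
  ∀ t ∈ TI, ∑ p, w p * N.C p t ≤ 0

/-- The `TI`-induced subnet is conflict-free: every place has at most one
output transition among `TI`. -/
def ConflictFreeSubnet (N : PetriNet m n) (TI : Set (Fin n)) : Prop :=
  ∀ p : Fin m, ∀ t ∈ TI, ∀ t' ∈ TI, 0 < N.Pre p t → 0 < N.Pre p t' → t = t'

/-- `σ` consists only of transitions in `TI`. -/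
def ImplicitSeq (TI : Set (Fin n)) (σ : List (Fin n)) : Prop := ∀ t ∈ σ, t ∈ TI

/-- Implicit reach of a marking `Mb`. -/
def RI (N : PetriNet m n) (TI : Set (Fin n)) (Mb : Fin m → ℕ) : Set (Fin m → ℕ) :=
  {M | ∃ σ, ImplicitSeq TI σ ∧ N.fires Mb σ M}

/-- Reachability set. -/
def Reach (N : PetriNet m n) (M0 : Fin m → ℕ) : Set (Fin m → ℕ) :=
  {M | ∃ σ, N.fires M0 σ M}

/-- State equation `M' = M + C·y` (the nonnegativity `M' ≥ 0` is implicit in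
`M' : Fin m → ℕ`). -/
def stateEq (N : PetriNet m n) (M : Fin m → ℕ) (y : Fin n → ℕ) (M' : Fin m → ℕ) : Prop :=
  ∀ p, (M' p : ℤ) = (M p : ℤ) + ∑ t, N.C p t * (y t : ℤ)

/-- `σ` is an explanation of `t` at `M`: an implicit sequence after which `t`
is enabled. -/
def IsExplanation (N : PetriNet m n) (TI : Set (Fin n)) (M : Fin m → ℕ)
    (t : Fin n) (σ : List (Fin n)) : Prop :=
  ImplicitSeq TI σ ∧ ∃ M', N.fires M σ M' ∧ N.enabled M' t

/-- `y` is a minimal explanation vector of `t` at `M`. -/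
def MinExplVec (N : PetriNet m n) (TI : Set (Fin n)) (M : Fin m → ℕ)
    (t : Fin n) (y : Fin n → ℕ) : Prop :=
  (∃ σ, N.IsExplanation TI M t σ ∧ fvec σ = y) ∧
    ∀ σ', N.IsExplanation TI M t σ' → ¬ fvec σ' < y

/-- `y` is the firing vector of some implicit sequence firable at `M`. -/
def FirableVec (N : PetriNet m n) (TI : Set (Fin n)) (M : Fin m → ℕ)
    (y : Fin n → ℕ) : Prop :=
  ∃ σ M', ImplicitSeq TI σ ∧ fvec σ = y ∧ N.fires M σ M'

/-- `y` is a maximal implicit firing vector at `M`. -/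
def MaximalIFV (N : PetriNet m n) (TI : Set (Fin n)) (M : Fin m → ℕ)
    (y : Fin n → ℕ) : Prop :=
  N.FirableVec TI M y ∧ ∀ y', N.FirableVec TI M y' → ¬ y < y'

/-- `y` is the maximal implicit firing vector at `M`, dominating all others. -/
def GreatestIFV (N : PetriNet m n) (TI : Set (Fin n)) (M : Fin m → ℕ)
    (y : Fin n → ℕ) : Prop :=
  N.FirableVec TI M y ∧ ∀ y', N.FirableVec TI M y' → y' ≤ y

/-- One step of the BRG: fire a minimal explanation followed by an explicit
transition `t ∉ TI`. -/
def BRGstep (N : PetriNet m n) (TI : Set (Fin n)) (M1 M2 : Fin m → ℕ) : Prop :=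
  ∃ t ∉ TI, ∃ y, N.MinExplVec TI M1 t y ∧
    ∀ p, (M2 p : ℤ) = (M1 p : ℤ) + (∑ s, N.C p s * (y s : ℤ)) + N.C p t

/-- `Mb` is a basis marking of the BRG with initial marking `M0`. -/
def Basis (N : PetriNet m n) (TI : Set (Fin n)) (M0 Mb : Fin m → ℕ) : Prop :=
  Relation.ReflTransGen (N.BRGstep TI) M0 Mb

/-- A marking is dead if it enables no transition. -/
def Dead (N : PetriNet m n) (M : Fin m → ℕ) : Prop := ∀ t, ¬ N.enabled M t

/-- Final markings of the GMEC `(w, k)`. -/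
def Final (w : Fin m → ℤ) (k : ℤ) (M : Fin m → ℕ) : Prop :=
  ∑ p, w p * (M p : ℤ) ≤ k

/-- The plant is non-blocking. -/
def NonBlocking (N : PetriNet m n) (M0 : Fin m → ℕ) (w : Fin m → ℤ) (k : ℤ) : Prop :=
  ∀ M ∈ N.Reach M0, ∃ M' ∈ N.Reach M, Final w k M'

/-- Boundedness of the marked net. -/
def Bounded (N : PetriNet m n) (M0 : Fin m → ℕ) : Prop :=
  ∃ K, ∀ M ∈ N.Reach M0, ∀ p, M p ≤ K

end PetriNet

open PetriNet

/-- an explicit transition sharing no input place with the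
implicit transitions remains enabled under any implicit firings. -/
theorem explicit_persistence {m n : ℕ} (N : PetriNet m n) (TI : Set (Fin n))
    (t : Fin n)
    (hsep : ∀ p, 0 < N.Pre p t → ∀ t' ∈ TI, N.Pre p t' = 0)
    (M M' : Fin m → ℕ) (hen : N.enabled M t)
    (σ : List (Fin n)) (hσ : ImplicitSeq TI σ) (hf : N.fires M σ M') :
    N.enabled M' t := by
  induction σ generalizing M with
  | nil => cases hf; exact hen
  | cons t' σ' ih =>
    cases hf with
    | cons ht' hrest =>
    refine ih _ ?_ (fun s hs => hσ s (List.mem_cons_of_mem _ hs)) hrest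
    intro p
    rcases Nat.eq_zero_or_pos (N.Pre p t) with h0 | hpos
    · omega
    · have h := hsep p hpos t' (hσ t' List.mem_cons_self)
      have := hen p
      simp only [PetriNet.fire, h]
      omega
end

section
/- Let G = (N, M_0, F) be a bounded plant and B a CI-BRG of G with basis partition (T_E, T_I). If every basis marking M_b of B satisfies R_I(M_b) ∩ F ≠ ∅ (i.e., the i-maximal marking of every basis marking is final), then G is non-blocking. -/
namespace PetriNet

variable {m n : ℕ}

theorem fires_append {N : PetriNet m n} {M M1 M2 : Fin m → ℕ} {σ1 σ2 : List (Fin n)}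
    (h1 : N.fires M σ1 M1) (h2 : N.fires M1 σ2 M2) : N.fires M (σ1 ++ σ2) M2 := by
  induction h1 with
  | nil M => simpa using h2
  | cons he hf ih => exact .cons he (ih h2)

theorem fires_split {N : PetriNet m n} {M M2 : Fin m → ℕ} {σ1 σ2 : List (Fin n)}
    (h : N.fires M (σ1 ++ σ2) M2) : ∃ M1, N.fires M σ1 M1 ∧ N.fires M1 σ2 M2 := by
  induction σ1 generalizing M with
  | nil => exact ⟨M, .nil M, h⟩
  | cons t τ ih =>
    cases h with
    | cons he hf =>
      obtain ⟨M1, h1, h2⟩ := ih hf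
      exact ⟨M1, .cons he h1, h2⟩

theorem fire_int {N : PetriNet m n} {M : Fin m → ℕ} {t : Fin n}
    (he : N.enabled M t) (p : Fin m) :
    (N.fire M t p : ℤ) = (M p : ℤ) + N.C p t := by
  have := he p
  simp only [fire, C]
  omega

theorem fvec_cons (t : Fin n) (σ : List (Fin n)) (s : Fin n) :
    fvec (t :: σ) s = fvec σ s + if t = s then 1 else 0 := by
  simp only [fvec, List.count_cons, beq_iff_eq]

theorem fvec_append (σ1 σ2 : List (Fin n)) (s : Fin n) :
    fvec (σ1 ++ σ2) s = fvec σ1 s + fvec σ2 s := by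
  simp [fvec, List.count_append]

theorem fires_stateEq {N : PetriNet m n} {M M' : Fin m → ℕ} {σ : List (Fin n)}
    (h : N.fires M σ M') :
    ∀ p, (M' p : ℤ) = (M p : ℤ) + ∑ t, N.C p t * (fvec σ t : ℤ) := by
  induction h with
  | nil M => simp [fvec]
  | @cons M M' t σ he hf ih =>
    intro p
    have key : ∑ s, N.C p s * (fvec (t :: σ) s : ℤ)
        = (∑ s, N.C p s * (fvec σ s : ℤ)) + N.C p t := by
      have h1 : ∀ s : Fin n, N.C p s * (fvec (t :: σ) s : ℤ)
          = N.C p s * (fvec σ s : ℤ) + if t = s then N.C p s else 0 := by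
        intro s
        rw [fvec_cons]
        by_cases h : t = s <;> simp [h] <;> ring
      rw [Finset.sum_congr rfl (fun s _ => h1 s), Finset.sum_add_distrib,
        Finset.sum_ite_eq]
      simp
    rw [ih p, fire_int he p, key]
    ring

theorem marking_eq_of_stateEq {N : PetriNet m n} {M M1 M2 : Fin m → ℕ}
    {σ1 σ2 : List (Fin n)} (h1 : N.fires M σ1 M1) (h2 : N.fires M σ2 M2)
    (hv : ∀ s, fvec σ1 s = fvec σ2 s) : M1 = M2 := by
  funext p
  have e1 := fires_stateEq h1 p
  have e2 := fires_stateEq h2 p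
  have : (M1 p : ℤ) = (M2 p : ℤ) := by
    rw [e1, e2]
    congr 1
    exact Finset.sum_congr rfl (fun s _ => by rw [hv s])
  exact_mod_cast this

/-- Key non-conflict fact: an implicit transition shares no input place
with any other transition. -/
theorem no_shared_input {N : PetriNet m n} {TI : Set (Fin n)}
    (hnc : N.NonConflicting TI) {s t : Fin n} (hs : s ∈ TI) (hst : t ≠ s)
    (p : Fin m) : ¬ (0 < N.Pre p s ∧ 0 < N.Pre p t) := by
  rintro ⟨h1, h2⟩
  exact hnc s hs ⟨p, h1, t, hst, h2⟩

/-- Commutation / persistence: firing a transition `t` not occurring in an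
implicit sequence `σ` commutes with firing `σ`. -/
theorem fires_comm {N : PetriNet m n} {TI : Set (Fin n)}
    (hnc : N.NonConflicting TI) {σ : List (Fin n)} {t : Fin n}
    (hσ : ImplicitSeq TI σ) (htσ : t ∉ σ) :
    ∀ {M M' : Fin m → ℕ}, N.enabled M t → N.fires M σ M' →
      N.fires (N.fire M t) σ (N.fire M' t) ∧ N.enabled M' t := by
  induction σ with
  | nil =>
    intro M M' ht hf
    cases hf
    exact ⟨.nil _, ht⟩
  | cons s σ ih =>
    intro M M' ht hf
    cases hf with
    | cons hs hf' =>
      have hsTI : s ∈ TI := hσ s List.mem_cons_self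
      have hst : t ≠ s := fun h => htσ (h ▸ (List.mem_cons_self : s ∈ s :: σ))
      have hkey := fun p => no_shared_input hnc hsTI hst p
      have ht' : N.enabled (N.fire M s) t := by
        intro p
        have := hs p
        have := ht p
        have := hkey p
        simp only [fire]
        omega
      have hs' : N.enabled (N.fire M t) s := by
        intro p
        have := hs p
        have := ht p
        have := hkey p
        simp only [fire]
        omega
      have hswap : N.fire (N.fire M s) t = N.fire (N.fire M t) s := by
        funext p
        have := hs p
        have := ht p
        have := hkey p
        simp only [fire]
        omega
      obtain ⟨h1, h2⟩ := ih (fun u hu => hσ u (List.mem_cons_of_mem s hu))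
        (fun h => htσ (List.mem_cons_of_mem s h)) ht' hf'
      rw [hswap] at h1
      exact ⟨.cons hs' h1, h2⟩

theorem mem_split_first {α : Type*} {t : α} {l : List α} (h : t ∈ l) :
    ∃ l1 l2, l = l1 ++ t :: l2 ∧ t ∉ l1 := by
  induction l with
  | nil => cases h
  | cons a l ih =>
    by_cases hat : t = a
    · exact ⟨[], l, by simp [hat], List.not_mem_nil⟩
    · have hl : t ∈ l := by
        cases h with
        | head => exact absurd rfl hat
        | tail _ h => exact h
      obtain ⟨l1, l2, rfl, hnot⟩ := ih hl
      exact ⟨a :: l1, l2, rfl, by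
        intro hmem
        rcases List.mem_cons.mp hmem with h | h
        exacts [hat h, hnot h]⟩

theorem fvec_eq_zero_of_not_mem {σ : List (Fin n)} {t : Fin n} (h : t ∉ σ) :
    fvec σ t = 0 := List.count_eq_zero.mpr h

/-- Diamond / join lemma for implicit sequences in a non-conflicting subnet. -/
theorem diamond {N : PetriNet m n} {TI : Set (Fin n)}
    (hnc : N.NonConflicting TI) :
    ∀ (σ1 : List (Fin n)) {σ2 : List (Fin n)} {M M1 M2 : Fin m → ℕ},
      ImplicitSeq TI σ1 → ImplicitSeq TI σ2 →
      N.fires M σ1 M1 → N.fires M σ2 M2 →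
      ∃ σ' M'', ImplicitSeq TI σ' ∧ N.fires M1 σ' M'' ∧
        ∀ s, fvec σ1 s + fvec σ' s = max (fvec σ1 s) (fvec σ2 s) := by
  intro σ1
  induction σ1 with
  | nil =>
    intro σ2 M M1 M2 _ h2 hf1 hf2
    cases hf1
    exact ⟨σ2, M2, h2, hf2, by intro s; simp [fvec]⟩
  | cons t τ ih =>
    intro σ2 M M1 M2 h1 h2 hf1 hf2
    cases hf1 with
    | cons ht hfτ =>
      have hτI : ImplicitSeq TI τ := fun u hu => h1 u (List.mem_cons_of_mem t hu)
      by_cases htm : t ∈ σ2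
      · obtain ⟨α, β, rfl, hα⟩ := mem_split_first htm
        obtain ⟨Mα, hfα, hftβ⟩ := fires_split hf2
        cases hftβ with
        | cons htα hfβ =>
          have hαI : ImplicitSeq TI α := fun u hu => h2 u (by simp [hu])
          have hβI : ImplicitSeq TI β := fun u hu => h2 u (by simp [hu])
          have hcomm := fires_comm hnc hαI hα ht hfα
          have hf2' : N.fires (N.fire M t) (α ++ β) M2 := fires_append hcomm.1 hfβ
          have hαβI : ImplicitSeq TI (α ++ β) := by
            intro u hu
            rcases List.mem_append.mp hu with h | h
            exacts [hαI u h, hβI u h]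
          obtain ⟨σ', M'', hi, hf, hv⟩ := ih hτI hαβI hfτ hf2'
          refine ⟨σ', M'', hi, hf, fun s => ?_⟩
          have := hv s
          rw [fvec_append] at this ⊢
          rw [fvec_cons, fvec_cons]
          by_cases hst : t = s <;> simp [hst] at this ⊢ <;> omega
      · have hcomm := fires_comm hnc h2 htm ht hf2
        obtain ⟨σ', M'', hi, hf, hv⟩ := ih hτI h2 hfτ hcomm.1
        refine ⟨σ', M'', hi, hf, fun s => ?_⟩
        have := hv s
        rw [fvec_cons]
        by_cases hst : t = s
        · subst hst
          have h0 : fvec σ2 t = 0 := fvec_eq_zero_of_not_mem htm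
          rw [h0] at this ⊢
          omega
        · simp [hst] at this ⊢
          omega

/-- One firing step preserves membership in the implicit reach of some basis
marking. -/
theorem step_pres {N : PetriNet m n} {TI : Set (Fin n)} {M0 : Fin m → ℕ}
    (hnc : N.NonConflicting TI) {Mb M : Fin m → ℕ} {t : Fin n}
    (hB : N.Basis TI M0 Mb) (hM : M ∈ N.RI TI Mb) (ht : N.enabled M t) :
    ∃ Mb', N.Basis TI M0 Mb' ∧ N.fire M t ∈ N.RI TI Mb' := by
  obtain ⟨σI, hσI, hfI⟩ := hM
  by_cases htI : t ∈ TI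
  · refine ⟨Mb, hB, σI ++ [t], ?_, fires_append hfI (.cons ht (.nil _))⟩
    intro u hu
    rcases List.mem_append.mp hu with h | h
    · exact hσI u h
    · simp at h; subst h; exact htI
  · -- explicit transition: build a BRG step with a minimal explanation
    have hSne : (∑ s, fvec σI s) ∈
        {c : ℕ | ∃ σ, (N.IsExplanation TI Mb t σ ∧ fvec σ ≤ fvec σI) ∧ ∑ s, fvec σ s = c} :=
      ⟨σI, ⟨⟨hσI, M, hfI, ht⟩, le_rfl⟩, rfl⟩
    obtain ⟨σy, ⟨⟨hσyI, My, hfy, hty⟩, hyle⟩, hsum⟩ :=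
      Nat.sInf_mem (Set.nonempty_of_mem hSne)
    have hmin : N.MinExplVec TI Mb t (fvec σy) := by
      refine ⟨⟨σy, ⟨hσyI, My, hfy, hty⟩, rfl⟩, ?_⟩
      intro σ' hexp hlt
      have hle : fvec σ' ≤ fvec σy := le_of_lt hlt
      have hmem : ∑ s, fvec σ' s ∈
          {c : ℕ | ∃ σ, (N.IsExplanation TI Mb t σ ∧ fvec σ ≤ fvec σI) ∧ ∑ s, fvec σ s = c} :=
        ⟨σ', ⟨hexp, hle.trans hyle⟩, rfl⟩
      have hstrict : ∑ s, fvec σ' s < ∑ s, fvec σy s := by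
        obtain ⟨h1, h2⟩ := lt_iff_le_not_ge.mp hlt
        obtain ⟨i, hi⟩ : ∃ i, ¬ fvec σy i ≤ fvec σ' i := by
          by_contra hcon
          push_neg at hcon
          exact h2 hcon
        exact Finset.sum_lt_sum (fun j _ => h1 j)
          ⟨i, Finset.mem_univ i, lt_of_not_ge hi⟩
      have := Nat.sInf_le hmem
      omega
    refine ⟨N.fire My t, hB.tail ⟨t, htI, fvec σy, hmin, fun p => ?_⟩, ?_⟩
    · rw [fire_int hty p, fires_stateEq hfy p]
    · obtain ⟨σ', M'', hi', hf', hv⟩ := diamond hnc σy hσyI hσI hfy hfI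
      have hveq : ∀ s, fvec (σy ++ σ') s = fvec σI s := by
        intro s
        rw [fvec_append]
        have h1 := hv s
        rw [max_eq_right (hyle s)] at h1
        omega
      have hMeq : M'' = M := marking_eq_of_stateEq (fires_append hfy hf') hfI hveq
      subst hMeq
      have htσ' : t ∉ σ' := fun h => htI (hi' t h)
      exact ⟨σ', hi', (fires_comm hnc hi' htσ' hty hf').1⟩

theorem reach_basis {N : PetriNet m n} {TI : Set (Fin n)} {M0 : Fin m → ℕ}
    (hnc : N.NonConflicting TI) {M M' : Fin m → ℕ} {σ : List (Fin n)}
    (h : N.fires M σ M') :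
    ∀ Mb, N.Basis TI M0 Mb → M ∈ N.RI TI Mb →
      ∃ Mb', N.Basis TI M0 Mb' ∧ M' ∈ N.RI TI Mb' := by
  induction h with
  | nil M => exact fun Mb hB hM => ⟨Mb, hB, hM⟩
  | cons he hf ih =>
    intro Mb hB hM
    obtain ⟨Mb', hB', hM'⟩ := step_pres hnc hB hM he
    exact ih Mb' hB' hM'

theorem weighted_sum_fires {N : PetriNet m n} {M M' : Fin m → ℕ} {σ : List (Fin n)}
    (h : N.fires M σ M') (w : Fin m → ℤ) :
    ∑ p, w p * (M' p : ℤ)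
      = (∑ p, w p * (M p : ℤ)) + ∑ s, (∑ p, w p * N.C p s) * (fvec σ s : ℤ) := by
  have e : ∀ p, w p * (M' p : ℤ)
      = w p * (M p : ℤ) + ∑ s, w p * N.C p s * (fvec σ s : ℤ) := by
    intro p
    rw [fires_stateEq h p, mul_add, Finset.mul_sum]
    simp [mul_assoc]
  rw [Finset.sum_congr rfl (fun p _ => e p), Finset.sum_add_distrib]
  congr 1
  rw [Finset.sum_comm]
  exact Finset.sum_congr rfl fun s _ => (Finset.sum_mul _ _ _).symm

end PetriNet

open PetriNet

/-- if the implicit reach of every basis marking of the CI-BRG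
meets the final set, then the bounded plant is non-blocking. -/
theorem nonblocking_of_all_basis_final {m n : ℕ} (N : PetriNet m n)
    (TI : Set (Fin n)) (M0 : Fin m → ℕ) (w : Fin m → ℤ) (k : ℤ)
    (hb : N.Bounded M0)
    (hacyc : N.SubnetAcyclic TI) (hnc : N.NonConflicting TI)
    (hni : N.NonIncreasing w TI)
    (hall : ∀ Mb, N.Basis TI M0 Mb → ∃ M ∈ N.RI TI Mb, Final w k M) :
    N.NonBlocking M0 w k := by
  intro M hM
  obtain ⟨σ, hf⟩ := hM
  obtain ⟨Mb, hB, hMRI⟩ := reach_basis hnc hf M0 Relation.ReflTransGen.refl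
    ⟨[], fun u hu => absurd hu List.not_mem_nil, .nil M0⟩
  obtain ⟨Mf, ⟨σf, hσf, hff⟩, hfin⟩ := hall Mb hB
  obtain ⟨σI, hσI, hfI⟩ := hMRI
  obtain ⟨σ', M'', hi', hf', hv⟩ := diamond hnc σI hσI hσf hfI hff
  refine ⟨M'', ⟨σ', hf'⟩, ?_⟩
  have e1 := weighted_sum_fires (fires_append hfI hf') w
  have e2 := weighted_sum_fires hff w
  have hterm : ∀ s, (∑ p, w p * N.C p s) * (fvec (σI ++ σ') s : ℤ)
      ≤ (∑ p, w p * N.C p s) * (fvec σf s : ℤ) := by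
    intro s
    rcases Nat.eq_zero_or_pos (fvec σI s) with h0 | hpos
    · have heq : fvec (σI ++ σ') s = fvec σf s := by
        have h1 := hv s
        rw [h0, Nat.zero_max] at h1
        rw [fvec_append, h0]
        simpa using h1
      rw [heq]
    · have hsTI : s ∈ TI := by
        by_contra hc
        have : s ∉ σI := fun hmem => hc (hσI s hmem)
        rw [fvec_eq_zero_of_not_mem this] at hpos
        omega
      have hge : (fvec σf s : ℤ) ≤ (fvec (σI ++ σ') s : ℤ) := by
        have h1 := hv s
        have h2 := le_max_right (fvec σI s) (fvec σf s)
        rw [fvec_append]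
        exact_mod_cast by omega
      exact mul_le_mul_of_nonpos_left hge (hni s hsTI)
  have key : ∑ p, w p * (M'' p : ℤ) ≤ ∑ p, w p * (Mf p : ℤ) := by
    rw [e1, e2]
    exact add_le_add_right (Finset.sum_le_sum fun s _ => hterm s) _
  exact le_trans key hfin
end
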